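/- arXiv:2003.00565 — 5 statements merged into one kernel-verified Lean document; each statement's English description precedes it below -/
import Mathlib

section
/- Let N ≥ 1, let L be a real symmetric N×N positive semidefinite matrix with L·𝟏 = 0 and kernel exactly the span of 𝟏, let k be an index, h > 0, Δ = h·e_k e_kᵀ, and let P_T, δ be real numbers. Define S(t) = (P_T + δ)·𝟏 + exp(−t(L + Δ))·(−δ·𝟏). Then: (i) S(0) = P_T·𝟏; (ii) for every t, S satisfies the differential equation S′(t) = −(L + Δ)·S(t) + h·(P_T + δ)·e_k; and (iii) S(t) converges to (P_T + δ)·𝟏 as t → ∞. In other words, all entries of S(t) reach consensus on the updated total capacity P_T + δ. -/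
open Matrix

private lemma exp_neg_smul_tendsto_zero (N : ℕ) (M : Matrix (Fin N) (Fin N) ℝ)
    (hM : M.PosDef) :
    Filter.Tendsto (fun t : ℝ => NormedSpace.exp (-(t • M))) Filter.atTop (nhds 0) := by
  classical
  have hH := hM.1
  set U : Matrix (Fin N) (Fin N) ℝ := (hH.eigenvectorUnitary : Matrix (Fin N) (Fin N) ℝ) with hUdef
  have hU : U ∈ Matrix.unitaryGroup (Fin N) ℝ := (hH.eigenvectorUnitary).2
  have hU1 : star U * U = 1 := hU.1
  have hUunit : IsUnit U := ⟨Unitary.toUnits hH.eigenvectorUnitary, rfl⟩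
  have hUinv : U⁻¹ = star U := inv_eq_left_inv hU1
  have hexp : ∀ t : ℝ, NormedSpace.exp (-(t • M))
      = U * Matrix.diagonal (fun i => Real.exp (-(t * hH.eigenvalues i))) * U⁻¹ := by
    intro t
    have hspec : M = U * Matrix.diagonal (fun i => hH.eigenvalues i) * U⁻¹ := by
      rw [hUinv]
      simpa [Function.comp] using hH.spectral_theorem
    have h1 : -(t • M) = U * Matrix.diagonal (fun i => -(t * hH.eigenvalues i)) * U⁻¹ := by
      have hd : Matrix.diagonal (fun i => -(t * hH.eigenvalues i))
          = -(t • Matrix.diagonal (fun i => hH.eigenvalues i)) := by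
        ext i j
        by_cases hij : i = j <;> simp [Matrix.diagonal, hij]
      rw [hd]
      simp only [Matrix.mul_neg, Matrix.neg_mul, Matrix.mul_smul, Matrix.smul_mul]
      rw [← hspec]
    rw [h1, Matrix.exp_conj U _ hUunit]
    congr 1
    rw [Matrix.exp_diagonal]
    congr 1
    rw [Pi.exp_def]
    funext i
    rw [← Real.exp_eq_exp_ℝ]
  have hdiag : Filter.Tendsto (fun t : ℝ => (fun i => Real.exp (-(t * hH.eigenvalues i)) : Fin N → ℝ))
      Filter.atTop (nhds 0) := by
    rw [tendsto_pi_nhds]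
    intro i
    have hpos := hM.eigenvalues_pos i
    have hlin : Filter.Tendsto (fun t : ℝ => t * hH.eigenvalues i) Filter.atTop Filter.atTop :=
      Filter.Tendsto.atTop_mul_const hpos Filter.tendsto_id
    have := Real.tendsto_exp_atBot.comp (Filter.tendsto_neg_atTop_atBot.comp hlin)
    simpa [Function.comp_def] using this
  have hcont : Continuous (fun A : Matrix (Fin N) (Fin N) ℝ => U * A * U⁻¹) :=
    (continuous_const.matrix_mul continuous_id).matrix_mul continuous_const
  have := (hcont.tendsto (Matrix.diagonal (0 : Fin N → ℝ))).comp
    (continuous_id.matrix_diagonal.tendsto (0 : Fin N → ℝ) |>.comp hdiag)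
  simp only [Function.comp_def] at this
  have h0 : U * Matrix.diagonal (0 : Fin N → ℝ) * U⁻¹ = 0 := by
    ext i j; simp [Matrix.mul_apply, Matrix.diagonal]
  rw [h0] at this
  refine this.congr fun t => ?_
  rw [hexp t]
  simp only [id_eq]

private lemma exp_neg_smul_mulVec_hasDerivAt (N : ℕ) (M : Matrix (Fin N) (Fin N) ℝ)
    (v : Fin N → ℝ) (t : ℝ) :
    HasDerivAt (fun t : ℝ => NormedSpace.exp (-(t • M)) *ᵥ v)
      (((-M) * NormedSpace.exp (-(t • M))) *ᵥ v) t := by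
  letI : NormedRing (Matrix (Fin N) (Fin N) ℝ) := Matrix.linftyOpNormedRing
  letI : NormedAlgebra ℝ (Matrix (Fin N) (Fin N) ℝ) := Matrix.linftyOpNormedAlgebra
  let Φlin : Matrix (Fin N) (Fin N) ℝ →ₗ[ℝ] (Fin N → ℝ) :=
    { toFun := fun A => A *ᵥ v
      map_add' := fun A B => Matrix.add_mulVec A B v
      map_smul' := fun c A => Matrix.smul_mulVec c A v }
  let Φ : Matrix (Fin N) (Fin N) ℝ →L[ℝ] (Fin N → ℝ) := Φlin.toContinuousLinearMap
  have h1 : HasDerivAt (fun u : ℝ => NormedSpace.exp (u • (-M)))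
      ((-M) * NormedSpace.exp (t • (-M))) t := hasDerivAt_exp_smul_const' (-M) t
  have h2 := Φ.hasFDerivAt.comp_hasDerivAt t h1
  simp only [Function.comp_def, ContinuousLinearMap.coe_coe] at h2
  have hsm : ∀ u : ℝ, u • (-M) = -(u • M) := fun u => smul_neg u M
  have h3 : (fun u : ℝ => Φ (NormedSpace.exp (u • (-M))))
      = fun u : ℝ => NormedSpace.exp (-(u • M)) *ᵥ v := by
    funext u; rw [hsm]; rfl
  rw [h3, hsm] at h2
  exact h2

/-- The consensus trajectory
`S(t) = (P_T+δ)·𝟏 + exp(−t(L+Δ))·(−δ·𝟏)` satisfies `S(0) = P_T·𝟏`, the ODE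
`S′ = −(L+Δ)S + h(P_T+δ)e_k`, and converges to `(P_T+δ)·𝟏`. -/
theorem consensus_trajectory_properties
    (N : ℕ) (hN : 1 ≤ N) (L : Matrix (Fin N) (Fin N) ℝ)
    (hsymm : L.IsSymm) (hpsd : L.PosSemidef)
    (hL1 : L *ᵥ (fun _ => (1 : ℝ)) = 0)
    (hker : ∀ u : Fin N → ℝ, L *ᵥ u = 0 → ∃ c : ℝ, u = fun _ => c)
    (k : Fin N) (h : ℝ) (hh : 0 < h) (PT δ : ℝ)
    (S : ℝ → Fin N → ℝ)
    (hS : S = fun t =>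
      (fun _ => PT + δ) +
        NormedSpace.exp (-(t • (L + Matrix.single k k h))) *ᵥ (fun _ => -δ)) :
    S 0 = (fun _ => PT) ∧
    (∀ t : ℝ, HasDerivAt S
        (-((L + Matrix.single k k h) *ᵥ S t) + (h * (PT + δ)) • (Pi.single k 1 : Fin N → ℝ)) t) ∧
    Filter.Tendsto S Filter.atTop (nhds (fun _ => PT + δ)) := by
  classical
  set M : Matrix (Fin N) (Fin N) ℝ := L + Matrix.single k k h with hMdef
  set v : Fin N → ℝ := fun _ => -δ with hvdef
  have hstd : ∀ u : Fin N → ℝ,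
      Matrix.single k k h *ᵥ u = (h * u k) • (Pi.single k 1 : Fin N → ℝ) := by
    intro u
    ext i
    simp [Matrix.mulVec, dotProduct, Matrix.single, Pi.single_apply, ite_and,
      Finset.sum_ite_eq, eq_comm]
  have hMone : M *ᵥ (fun _ => (1 : ℝ)) = h • (Pi.single k 1 : Fin N → ℝ) := by
    rw [hMdef, Matrix.add_mulVec, hL1, hstd]
    simp
  have hMpd : M.PosDef := by
    have hherm : M.IsHermitian := by
      refine hpsd.1.add ?_
      ext i j
      simp [Matrix.single, conjTranspose_apply, and_comm]
    refine posDef_iff_dotProduct_mulVec.mpr ⟨hherm, fun x hx => ?_⟩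
    have hq : star x ⬝ᵥ M *ᵥ x = star x ⬝ᵥ L *ᵥ x + h * (x k) ^ 2 := by
      rw [hMdef, Matrix.add_mulVec, dotProduct_add, hstd, dotProduct_smul]
      simp [dotProduct, Pi.single_apply, mul_comm, sq, mul_assoc]
      ring
    rw [hq]
    have h1 : 0 ≤ star x ⬝ᵥ L *ᵥ x := hpsd.dotProduct_mulVec_nonneg x
    have h2 : 0 ≤ h * (x k) ^ 2 := by positivity
    rcases lt_or_eq_of_le h1 with hlt | heq
    · linarith
    · have hLx : L *ᵥ x = 0 := (hpsd.dotProduct_mulVec_zero_iff x).1 heq.symm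
      obtain ⟨c, rfl⟩ := hker x hLx
      have hc : c ≠ 0 := by
        intro hc; apply hx; funext i; simp [hc]
      have : 0 < h * c ^ 2 := by positivity
      linarith
  refine ⟨?_, ?_, ?_⟩
  · rw [hS]
    funext i
    simp [NormedSpace.exp_zero, Matrix.one_mulVec, hvdef]
  · intro t
    have hder := exp_neg_smul_mulVec_hasDerivAt N M v t
    have hS' : S = fun t => (fun _ => PT + δ) + NormedSpace.exp (-(t • M)) *ᵥ v := hS
    rw [hS']
    have := hder.const_add (fun _ => PT + δ : Fin N → ℝ)
    convert this using 1
    case e'_4 => rfl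
    case e'_5 => rfl
    case e'_6 => rfl
    -- show claimed derivative = ((-M) * exp(-(t•M))) *ᵥ v
    simp only [Matrix.neg_mul, Matrix.neg_mulVec, ← Matrix.mulVec_mulVec]
    have hconst : (fun _ => PT + δ : Fin N → ℝ) = (PT + δ) • (fun _ => (1 : ℝ)) := by
      funext i; simp
    rw [Matrix.mulVec_add, hconst, Matrix.mulVec_smul, hMone, smul_smul]
    rw [neg_add, mul_comm (PT + δ) h]
    abel
  · rw [hS]
    have hmv := ((continuous_id.matrix_mulVec (continuous_const : Continuous fun _ : Matrix (Fin N) (Fin N) ℝ => v)).tendsto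
      (0 : Matrix (Fin N) (Fin N) ℝ)).comp (exp_neg_smul_tendsto_zero N M hMpd)
    simp only [Function.comp_def, id_eq, Matrix.zero_mulVec] at hmv
    have := Filter.Tendsto.add
      (tendsto_const_nhds : Filter.Tendsto (fun _ : ℝ => (fun _ => PT + δ : Fin N → ℝ)) Filter.atTop (nhds _)) hmv
    simpa using this
end

section
/- Let N ≥ 2, let L be a real symmetric N×N positive semidefinite matrix with L·𝟏 = 0 and kernel exactly the span of 𝟏, let k be an index, h > 0, and Δ = h·e_k e_kᵀ. List the eigenvalues of L in nondecreasing order as 0 = λ_1(L) ≤ λ_2(L) ≤ … ≤ λ_N(L), and those of L + Δ as λ_1(L+Δ) ≤ … ≤ λ_N(L+Δ). Then 0 < λ_1(L + Δ) ≤ λ_2(L); that is, the smallest eigenvalue of the perturbed Laplacian is strictly positive and is bounded above by the second-smallest eigenvalue (algebraic connectivity) of L. -/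
open Matrix

lemma rayleigh_min {N : ℕ} {A : Matrix (Fin N) (Fin N) ℝ} (hA : A.IsHermitian)
    {μ : ℝ} (hμ : ∀ i, μ ≤ hA.eigenvalues i) (x : Fin N → ℝ) :
    μ * (x ⬝ᵥ x) ≤ x ⬝ᵥ (A *ᵥ x) := by
  set U : Matrix (Fin N) (Fin N) ℝ := (hA.eigenvectorUnitary : Matrix (Fin N) (Fin N) ℝ) with hU
  have hUU : U * star U = 1 := Matrix.mem_unitaryGroup_iff.mp hA.eigenvectorUnitary.2
  have h1 : A - μ • (1 : Matrix (Fin N) (Fin N) ℝ)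
      = U * diagonal (fun i => hA.eigenvalues i - μ) * star U := by
    have hsp := hA.spectral_theorem
    have hid : diagonal (RCLike.ofReal ∘ hA.eigenvalues) = diagonal hA.eigenvalues := rfl
    rw [hid] at hsp
    have h2 : μ • (1 : Matrix (Fin N) (Fin N) ℝ) = U * (μ • 1) * star U := by
      rw [mul_smul_one, smul_mul_assoc, hUU]
    have h3 : diagonal (fun i => hA.eigenvalues i - μ)
        = diagonal hA.eigenvalues - μ • 1 := by
      rw [smul_one_eq_diagonal, diagonal_sub]
    rw [h3, mul_sub, sub_mul, ← h2]
    exact congrArg (fun B => B - μ • (1 : Matrix (Fin N) (Fin N) ℝ)) hsp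
  have hpsd : (A - μ • (1 : Matrix (Fin N) (Fin N) ℝ)).PosSemidef := by
    rw [h1]
    exact (posSemidef_diagonal_iff.mpr (fun i => sub_nonneg.2 (hμ i))).mul_mul_conjTranspose_same _
  have := hpsd.dotProduct_mulVec_nonneg x
  simp only [star_trivial, sub_mulVec, dotProduct_sub, smul_mulVec, one_mulVec,
    dotProduct_smul, smul_eq_mul] at this
  linarith

/-- Listing the eigenvalues of the Laplacian `L` and of the
perturbed Laplacian `L + Δ` in nondecreasing order, the smallest eigenvalue of
`L + Δ` is strictly positive and at most the second-smallest eigenvalue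
(algebraic connectivity) of `L`. -/
theorem perturbed_laplacian_smallest_eigenvalue_bounds
    (N : ℕ) (hN : 2 ≤ N) (L : Matrix (Fin N) (Fin N) ℝ)
    (hsymm : L.IsSymm) (hpsd : L.PosSemidef)
    (hL1 : L *ᵥ (fun _ => (1 : ℝ)) = 0)
    (hker : ∀ u : Fin N → ℝ, L *ᵥ u = 0 → ∃ c : ℝ, u = fun _ => c)
    (k : Fin N) (h : ℝ) (hh : 0 < h)
    (hLh : L.IsHermitian)
    (hLΔh : (L + Matrix.single k k h).IsHermitian)
    (ev ev' : Fin N → ℝ)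
    (hev_mono : Monotone ev) (hev'_mono : Monotone ev')
    (hev : ∃ σ : Equiv.Perm (Fin N), ev = hLh.eigenvalues ∘ σ)
    (hev' : ∃ σ : Equiv.Perm (Fin N), ev' = hLΔh.eigenvalues ∘ σ) :
    0 < ev' ⟨0, by omega⟩ ∧ ev' ⟨0, by omega⟩ ≤ ev ⟨1, by omega⟩ := by
  obtain ⟨σ, hσ⟩ := hev
  obtain ⟨τ, hτ⟩ := hev'
  set e0 : Fin N := ⟨0, by omega⟩ with he0
  set e1 : Fin N := ⟨1, by omega⟩ with he1
  set M : Matrix (Fin N) (Fin N) ℝ := L + Matrix.single k k h with hM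
  -- quadratic form of the perturbation
  have hq : ∀ x : Fin N → ℝ, x ⬝ᵥ (Matrix.single k k h *ᵥ x) = h * (x k) ^ 2 := by
    intro x
    have hv : (Matrix.single k k h *ᵥ x) = fun i => if i = k then h * x k else 0 := by
      funext i
      simp [mulVec, dotProduct, Matrix.single, ite_and, eq_comm]
    rw [hv]
    simp [dotProduct]
    ring
  -- M is positive definite
  have hpd : M.PosDef := by
    refine PosDef.of_dotProduct_mulVec_pos hLΔh (fun x hx => ?_)
    simp only [star_trivial, hM, add_mulVec, dotProduct_add, hq]
    have hL := hpsd.dotProduct_mulVec_nonneg x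
    simp only [star_trivial] at hL
    rcases eq_or_lt_of_le hL with heq | hlt
    · have hLx : L *ᵥ x = 0 := by
        have := (hpsd.dotProduct_mulVec_zero_iff x).mp ?_
        · exact this
        · simpa using heq.symm
      obtain ⟨c, hc⟩ := hker x hLx
      have hc0 : c ≠ 0 := by
        intro hc0; apply hx; rw [hc, hc0]; rfl
      have hxk : x k = c := by rw [hc]
      have : 0 < h * x k ^ 2 := by
        apply mul_pos hh
        rw [hxk]; positivity
      linarith
    · have : 0 ≤ h * x k ^ 2 := by positivity
      linarith
  -- smallest perturbed eigenvalue is positive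
  have hpos : 0 < ev' e0 := by
    rw [hτ]
    exact hpd.eigenvalues_pos _
  refine ⟨hpos, ?_⟩
  -- ev e0 is min, ev' e0 is min
  have hminL : ∀ i, ev e0 ≤ hLh.eigenvalues i := by
    intro i
    have h1 : ev e0 ≤ ev (σ.symm i) := hev_mono (by simp [he0, Fin.le_def])
    calc ev e0 ≤ ev (σ.symm i) := h1
      _ = hLh.eigenvalues i := by rw [hσ]; simp
  have hminM : ∀ i, ev' e0 ≤ hLΔh.eigenvalues i := by
    intro i
    have h1 : ev' e0 ≤ ev' (τ.symm i) := hev'_mono (by simp [he0, Fin.le_def])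
    calc ev' e0 ≤ ev' (τ.symm i) := h1
      _ = hLΔh.eigenvalues i := by rw [hτ]; simp
  -- ev e0 = 0
  have hev00 : ev e0 = 0 := by
    have hle : ev e0 ≤ 0 := by
      have := rayleigh_min hLh hminL (fun _ => (1 : ℝ))
      rw [hL1] at this
      simp only [dotProduct_zero] at this
      have hone : ((fun _ => (1:ℝ)) : Fin N → ℝ) ⬝ᵥ ((fun _ => (1:ℝ)) : Fin N → ℝ) = (N : ℝ) := by
        simp [dotProduct]
      rw [hone] at this
      nlinarith [show (0:ℝ) < N by exact_mod_cast Nat.lt_of_lt_of_le (by norm_num) hN]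
    have hge : 0 ≤ ev e0 := by
      rw [hσ]; exact hpsd.eigenvalues_nonneg _
    linarith
  have hev1nn : 0 ≤ ev e1 := by
    rw [hσ]; exact hpsd.eigenvalues_nonneg _
  -- eigenvectors
  set w : Fin N → ℝ := ⇑(hLh.eigenvectorBasis (σ e0)) with hw
  set v : Fin N → ℝ := ⇑(hLh.eigenvectorBasis (σ e1)) with hv
  have hLw : L *ᵥ w = 0 := by
    rw [hw, hLh.mulVec_eigenvectorBasis]
    have : hLh.eigenvalues (σ e0) = ev e0 := by rw [hσ]; rfl
    rw [this, hev00, zero_smul]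
  have hLv : L *ᵥ v = ev e1 • v := by
    rw [hv, hLh.mulVec_eigenvectorBasis]
    congr 1
    rw [hσ]; rfl
  have hon := hLh.eigenvectorBasis.orthonormal
  have hne : σ e0 ≠ σ e1 := by
    intro hEq
    have : e0 = e1 := σ.injective hEq
    simp [he0, he1, Fin.ext_iff] at this
  have hwv : w ⬝ᵥ v = 0 := by
    have h1 := hon.2 hne
    simp only [EuclideanSpace.inner_eq_star_dotProduct] at h1
    rw [dotProduct_comm]
    simpa [dotProduct] using h1
  have hww : w ⬝ᵥ w = 1 := by
    have h1 : (inner ℝ (hLh.eigenvectorBasis (σ e0)) (hLh.eigenvectorBasis (σ e0)) : ℝ) = 1 := by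
      rw [real_inner_self_eq_norm_sq, hon.1 (σ e0)]; norm_num
    simp only [EuclideanSpace.inner_eq_star_dotProduct] at h1
    simpa [dotProduct] using h1
  have hvv : v ⬝ᵥ v = 1 := by
    have h1 : (inner ℝ (hLh.eigenvectorBasis (σ e1)) (hLh.eigenvectorBasis (σ e1)) : ℝ) = 1 := by
      rw [real_inner_self_eq_norm_sq, hon.1 (σ e1)]; norm_num
    simp only [EuclideanSpace.inner_eq_star_dotProduct] at h1
    simpa [dotProduct] using h1
  -- w is a nonzero constant
  obtain ⟨c, hc⟩ := hker w hLw
  have hc0 : c ≠ 0 := by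
    intro hc0
    rw [hc, hc0] at hww
    simp [dotProduct] at hww
  have hwk : w k = c := by rw [hc]
  -- the test vector
  set u : Fin N → ℝ := fun i => v k * w i - w k * v i with hu
  have huk : u k = 0 := by simp [hu]; ring
  have hΔu : Matrix.single k k h *ᵥ u = 0 := by
    funext i
    simp [mulVec, dotProduct, Matrix.single, ite_and, huk]
  have huu : u ⬝ᵥ u = (v k) ^ 2 + (w k) ^ 2 := by
    have hstep : u ⬝ᵥ u = (v k * v k) * (w ⬝ᵥ w) - (v k * w k) * (w ⬝ᵥ v)
        - (w k * v k) * (w ⬝ᵥ v) + (w k * w k) * (v ⬝ᵥ v) := by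
      simp only [hu, dotProduct, Finset.mul_sum, ← Finset.sum_sub_distrib,
        ← Finset.sum_add_distrib]
      apply Finset.sum_congr rfl; intro i _; ring
    rw [hstep, hww, hvv, hwv]; ring
  have hLu : L *ᵥ u = (-(w k * ev e1)) • v := by
    have hueq : u = v k • w - w k • v := by
      funext i; simp [hu]
    rw [hueq, mulVec_sub, mulVec_smul, mulVec_smul, hLw, hLv]
    simp only [smul_zero, zero_sub, smul_smul]
    rw [neg_smul]
  have huLu : u ⬝ᵥ (L *ᵥ u) = (w k) ^ 2 * ev e1 := by
    rw [hLu, dotProduct_smul]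
    have huv : u ⬝ᵥ v = -(w k) := by
      simp only [hu, dotProduct, sub_mul]
      rw [Finset.sum_sub_distrib]
      have h1 : ∑ i, v k * w i * v i = v k * (w ⬝ᵥ v) := by
        rw [dotProduct, Finset.mul_sum]; apply Finset.sum_congr rfl; intro i _; ring
      have h2 : ∑ i, w k * v i * v i = w k * (v ⬝ᵥ v) := by
        rw [dotProduct, Finset.mul_sum]; apply Finset.sum_congr rfl; intro i _; ring
      rw [h1, h2, hwv, hvv]; ring
    rw [huv, smul_eq_mul]; ring
  -- Rayleigh bound
  have hray := rayleigh_min hLΔh hminM u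
  have hMu : u ⬝ᵥ ((L + Matrix.single k k h) *ᵥ u) = (w k) ^ 2 * ev e1 := by
    rw [add_mulVec, hΔu, add_zero, huLu]
  rw [show ((L + Matrix.single k k h)) = M from rfl] at hMu
  rw [hMu, huu] at hray
  have hwk2 : 0 < (w k) ^ 2 := by rw [hwk]; positivity
  have hvk2 : 0 ≤ (v k) ^ 2 := sq_nonneg _
  nlinarith [hray, hev1nn, hwk2, hvk2]
end

section
/- Let N ≥ 1, let L be a real symmetric N×N positive semidefinite matrix with L·𝟏 = 0 and kernel exactly the span of 𝟏, let k be an index, h > 0, Δ = h·e_k e_kᵀ. Let P_T > 0, θ > 0, and let δ be a real number with |δ| < θ·P_T/(1 + √N). Define S(t) = (P_T + δ)·𝟏 + exp(−t(L + Δ))·(−δ·𝟏). Then for every t ≥ 0 and every index i, (1 − θ)·P_T ≤ S_i(t) ≤ (1 + θ)·P_T. -/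
open Matrix

/-- Orthogonal matrices preserve the sum of squares. -/
lemma sumsq_mulVec_unitary {N : ℕ} (U : Matrix (Fin N) (Fin N) ℝ)
    (hU : star U * U = 1) (w : Fin N → ℝ) :
    ∑ j, (U *ᵥ w) j ^ 2 = ∑ j, w j ^ 2 := by
  have h1 : ∑ j, (U *ᵥ w) j ^ 2 = star (U *ᵥ w) ⬝ᵥ (U *ᵥ w) := by
    simp [dotProduct, pow_two]
  have h2 : star (U *ᵥ w) ⬝ᵥ (U *ᵥ w) = star w ⬝ᵥ w := by
    rw [star_mulVec, dotProduct_mulVec, vecMul_vecMul, ← Matrix.star_eq_conjTranspose, hU,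
      vecMul_one]
  rw [h1, h2]
  simp [dotProduct, pow_two]

/-- Key contraction estimate: for `M` positive semidefinite and `t ≥ 0`, each component of
`exp(-(t•M)) *ᵥ v` is bounded (in square) by the sum of squares of `v`. -/
lemma contract_bound {N : ℕ} (M : Matrix (Fin N) (Fin N) ℝ) (hM : M.PosSemidef)
    {t : ℝ} (ht : 0 ≤ t) (v : Fin N → ℝ) (i : Fin N) :
    ((NormedSpace.exp (-(t • M))) *ᵥ v) i ^ 2 ≤ ∑ j, v j ^ 2 := by
  classical
  have hH : M.IsHermitian := hM.1
  set U : Matrix (Fin N) (Fin N) ℝ := (hH.eigenvectorUnitary : Matrix (Fin N) (Fin N) ℝ) with hUdef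
  have hU1 : star U * U = 1 := Unitary.coe_star_mul_self hH.eigenvectorUnitary
  have hU2 : U * star U = 1 := Unitary.coe_mul_star_self hH.eigenvectorUnitary
  set μ : Fin N → ℝ := hH.eigenvalues with hμdef
  have hspec : M = U * diagonal μ * star U := by
    have := hH.spectral_theorem
    simpa using this
  -- conjugation form of -(t•M)
  have hconj : -(t • M) = U * diagonal (fun j => -(t * μ j)) * star U := by
    rw [hspec]
    have : (-(t • (diagonal μ)) : Matrix (Fin N) (Fin N) ℝ) = diagonal (fun j => -(t * μ j)) := by
      rw [← diagonal_smul, ← diagonal_neg]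
      congr 1
    rw [← this]
    simp [Matrix.mul_smul, Matrix.smul_mul, Matrix.neg_mul, Matrix.mul_neg]
  set u : (Matrix (Fin N) (Fin N) ℝ)ˣ := Unitary.toUnits hH.eigenvectorUnitary with hudef
  have hu : (u : Matrix (Fin N) (Fin N) ℝ) = U := rfl
  have hui : ((u⁻¹ : (Matrix (Fin N) (Fin N) ℝ)ˣ) : Matrix (Fin N) (Fin N) ℝ) = star U := rfl
  have hconj2 : -(t • M) = (u : Matrix (Fin N) (Fin N) ℝ) *
      diagonal (fun j => -(t * μ j)) * ((u⁻¹ : (Matrix (Fin N) (Fin N) ℝ)ˣ) :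
        Matrix (Fin N) (Fin N) ℝ) := by
    rw [hu, hui]; exact hconj
  have hexp : NormedSpace.exp (-(t • M)) =
      U * diagonal (fun j => Real.exp (-(t * μ j))) * star U := by
    rw [hconj2, Matrix.exp_units_conj, Matrix.exp_diagonal, hu, hui]
    congr 2
    rw [Pi.exp_def]
    funext j
    rw [Real.exp_eq_exp_ℝ]
  -- bound each exponential factor
  have hd : ∀ j, (Real.exp (-(t * μ j))) ^ 2 ≤ 1 := by
    intro j
    have hμj : 0 ≤ μ j := hM.eigenvalues_nonneg j
    have : Real.exp (-(t * μ j)) ≤ 1 := by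
      rw [Real.exp_le_one_iff]
      nlinarith
    have hpos : 0 < Real.exp (-(t * μ j)) := Real.exp_pos _
    nlinarith
  set w : Fin N → ℝ := star U *ᵥ v with hwdef
  have hrw : (NormedSpace.exp (-(t • M))) *ᵥ v
      = U *ᵥ (diagonal (fun j => Real.exp (-(t * μ j))) *ᵥ w) := by
    rw [hexp, hwdef, mulVec_mulVec, mulVec_mulVec]
  calc ((NormedSpace.exp (-(t • M))) *ᵥ v) i ^ 2
      ≤ ∑ j, ((NormedSpace.exp (-(t • M))) *ᵥ v) j ^ 2 :=
        Finset.single_le_sum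
          (f := fun j => ((NormedSpace.exp (-(t • M))) *ᵥ v) j ^ 2)
          (fun j _ => sq_nonneg _) (Finset.mem_univ i)
    _ = ∑ j, (diagonal (fun j => Real.exp (-(t * μ j))) *ᵥ w) j ^ 2 := by
        rw [hrw, sumsq_mulVec_unitary U hU1]
    _ ≤ ∑ j, w j ^ 2 := by
        apply Finset.sum_le_sum
        intro j _
        rw [mulVec_diagonal, mul_pow]
        nlinarith [hd j, sq_nonneg (w j)]
    _ = ∑ j, v j ^ 2 := by
        have := sumsq_mulVec_unitary (star U) (by simpa using hU2) v
        simpa [hwdef] using this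

/-- `stdBasisMatrix k k h` is the diagonal matrix with `h` in position `k`. -/
lemma stdBasisMatrix_eq_diagonal {N : ℕ} (k : Fin N) (h : ℝ) :
    Matrix.single k k h = diagonal (Pi.single k h) := by
  ext i j
  simp only [Matrix.single, Matrix.of_apply, Matrix.diagonal_apply, Pi.single_apply]
  by_cases h1 : k = i <;> by_cases h2 : k = j <;> by_cases h3 : i = j <;>
    simp_all <;> simp_all [eq_comm]

/-- If `|δ| < θ·P_T/(1+√N)` then every component of the consensus
trajectory `S(t) = (P_T+δ)·𝟏 + exp(−t(L+Δ))·(−δ·𝟏)` stays in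
`[(1−θ)P_T, (1+θ)P_T]` for all `t ≥ 0`. -/
theorem consensus_estimates_bounds
    (N : ℕ) (hN : 1 ≤ N) (L : Matrix (Fin N) (Fin N) ℝ)
    (hsymm : L.IsSymm) (hpsd : L.PosSemidef)
    (hL1 : L *ᵥ (fun _ => (1 : ℝ)) = 0)
    (hker : ∀ u : Fin N → ℝ, L *ᵥ u = 0 → ∃ c : ℝ, u = fun _ => c)
    (k : Fin N) (h : ℝ) (hh : 0 < h)
    (PT θ δ : ℝ) (hPT : 0 < PT) (hθ : 0 < θ)
    (hδ : |δ| < θ * PT / (1 + Real.sqrt N))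
    (S : ℝ → Fin N → ℝ)
    (hS : S = fun t =>
      (fun _ => PT + δ) +
        NormedSpace.exp (-(t • (L + Matrix.single k k h))) *ᵥ (fun _ => -δ)) :
    ∀ t : ℝ, 0 ≤ t → ∀ i : Fin N,
      (1 - θ) * PT ≤ S t i ∧ S t i ≤ (1 + θ) * PT := by
  intro t ht i
  -- The perturbed matrix is positive semidefinite.
  have hΔpsd : (Matrix.single k k h).PosSemidef := by
    rw [stdBasisMatrix_eq_diagonal]
    exact Matrix.PosSemidef.diagonal (by
      intro j
      by_cases hj : k = j <;> simp [Pi.single_apply, hj, le_of_lt hh])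
  have hMpsd : (L + Matrix.single k k h).PosSemidef := hpsd.add hΔpsd
  set x : Fin N → ℝ :=
    NormedSpace.exp (-(t • (L + Matrix.single k k h))) *ᵥ (fun _ => -δ) with hxdef
  have hkey : x i ^ 2 ≤ ∑ _j : Fin N, (-δ) ^ 2 :=
    contract_bound _ hMpsd ht (fun _ => -δ) i
  have hsum : ∑ _j : Fin N, (-δ) ^ 2 = (N : ℝ) * δ ^ 2 := by
    simp [Finset.sum_const, mul_comm]
  have hsqN : Real.sqrt N ^ 2 = (N : ℝ) := Real.sq_sqrt (Nat.cast_nonneg N)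
  have hxabs : |x i| ≤ Real.sqrt N * |δ| := by
    have h1 : x i ^ 2 ≤ (Real.sqrt N * |δ|) ^ 2 := by
      rw [mul_pow, hsqN, sq_abs]
      rw [hsum] at hkey
      exact hkey
    have h2 : 0 ≤ Real.sqrt N * |δ| := mul_nonneg (Real.sqrt_nonneg _) (abs_nonneg _)
    nlinarith [abs_nonneg (x i), sq_abs (x i), abs_le_abs (le_refl (x i))]
  have hSval : S t i = PT + δ + x i := by
    rw [hS]; simp [hxdef]
  have hpos : 0 < 1 + Real.sqrt N := by positivity
  have hbound : |δ + x i| < θ * PT := by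
    calc |δ + x i| ≤ |δ| + |x i| := abs_add_le _ _
      _ ≤ |δ| + Real.sqrt N * |δ| := by linarith
      _ = (1 + Real.sqrt N) * |δ| := by ring
      _ < (1 + Real.sqrt N) * (θ * PT / (1 + Real.sqrt N)) := by
          exact mul_lt_mul_of_pos_left hδ hpos
      _ = θ * PT := by field_simp
  rw [abs_lt] at hbound
  constructor
  · rw [hSval]; nlinarith
  · rw [hSval]; nlinarith
end

section
/- Let N ≥ 1, let L be a real symmetric N×N positive semidefinite matrix with L·𝟏 = 0 and kernel exactly the span of 𝟏, let k be an index, h > 0, Δ = h·e_k e_kᵀ. Let P_T > 0, P_L > 0, let θ satisfy 0 < θ < 1 − P_L/P_T, and let δ be a real number with |δ| < θ·P_T/(1 + √N). Define S(t) = (P_T + δ)·𝟏 + exp(−t(L + Δ))·(−δ·𝟏). Then for every index i with maximum capacity P_{i,max} > 0, and every t ≥ 0, the commanded power P_i(t) = (P_L / S_i(t))·P_{i,max} satisfies P_i(t) < P_{i,max}. -/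
open Matrix

lemma stdBasis_psd (N : ℕ) (k : Fin N) (h : ℝ) (hh : 0 ≤ h) :
    (Matrix.single k k h).PosSemidef := by
  rw [Matrix.posSemidef_iff_dotProduct_mulVec]
  constructor
  · ext i j
    simp [Matrix.single, Matrix.conjTranspose_apply, and_comm]
  · intro x
    have hmv : (Matrix.single k k h) *ᵥ x = fun i => if k = i then h * x k else 0 := by
      ext i
      simp [Matrix.single, Matrix.mulVec, dotProduct, ite_and,
        Finset.sum_ite_eq, mul_comm]
    rw [hmv]
    simp only [dotProduct, star_trivial]
    rw [Finset.sum_congr rfl (fun j _ => by rw [mul_ite, mul_zero])]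
    rw [Finset.sum_ite_eq]
    simp only [Finset.mem_univ, if_true]
    nlinarith [sq_nonneg (x k)]

lemma entry_bound (N : ℕ) (M : Matrix (Fin N) (Fin N) ℝ) (hM : M.PosSemidef)
    (t : ℝ) (ht : 0 ≤ t) (v : Fin N → ℝ) (i : Fin N) :
    |(NormedSpace.exp (-(t • M)) *ᵥ v) i| ≤ Real.sqrt (∑ j, v j ^ 2) := by
  set A : Matrix (Fin N) (Fin N) ℝ := -(t • M) with hAdef
  have hA : A.IsHermitian := by
    have hm := hM.1
    unfold Matrix.IsHermitian at *
    rw [hAdef, conjTranspose_neg, conjTranspose_smul, hm, star_trivial]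
  set U : Matrix (Fin N) (Fin N) ℝ := (hA.eigenvectorUnitary : Matrix (Fin N) (Fin N) ℝ) with hUdef
  have hU1 : star U * U = 1 := (Matrix.mem_unitaryGroup_iff').mp (hA.eigenvectorUnitary).2
  have hU2 : U * star U = 1 := (Matrix.mem_unitaryGroup_iff).mp (hA.eigenvectorUnitary).2
  have hUunit : IsUnit U := ⟨⟨U, star U, hU2, hU1⟩, rfl⟩
  have hUinv : U⁻¹ = star U := Matrix.inv_eq_left_inv hU1
  set d : Fin N → ℝ := fun j => Real.exp (hA.eigenvalues j) with hddef
  have hexp : NormedSpace.exp A = U * Matrix.diagonal d * star U := by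
    have hspec := hA.spectral_theorem
    rw [Unitary.conjStarAlgAut_apply, ← hUdef] at hspec
    rw [← hUinv] at hspec
    rw [hspec, Matrix.exp_conj U _ hUunit, Matrix.exp_diagonal, hUinv]
    congr 2
    rw [Pi.exp_def]
    ext j
    simp [hddef, Real.exp_eq_exp_ℝ]
  have heig : ∀ j, hA.eigenvalues j ≤ 0 := by
    intro j
    have he := hA.eigenvalues_eq j
    set u : Fin N → ℝ := ⇑(hA.eigenvectorBasis j) with hudef
    have hq : 0 ≤ star u ⬝ᵥ (M *ᵥ u) := hM.dotProduct_mulVec_nonneg u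
    have hav : star u ⬝ᵥ (A *ᵥ u) = -(t * (star u ⬝ᵥ (M *ᵥ u))) := by
      rw [hAdef, Matrix.neg_mulVec, Matrix.smul_mulVec]
      simp [mul_comm]
    simp only [RCLike.re_to_real] at he
    rw [he, hav]
    have := mul_nonneg ht hq
    linarith
  have hd1 : ∀ j, d j ≤ 1 := fun j => Real.exp_le_one_iff.mpr (heig j)
  have hd0 : ∀ j, 0 ≤ d j := fun j => (Real.exp_pos _).le
  set w : Fin N → ℝ := star U *ᵥ v with hwdef
  have hentry : (NormedSpace.exp A *ᵥ v) i = ∑ j, U i j * (d j * w j) := by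
    rw [hexp, ← Matrix.mulVec_mulVec, ← Matrix.mulVec_mulVec, ← hwdef]
    simp [Matrix.mulVec, dotProduct, Matrix.diagonal]
  have hrow : ∑ j, U i j ^ 2 = 1 := by
    have h2 := congrFun (congrFun hU2 i) i
    simp only [Matrix.mul_apply, Matrix.one_apply_eq] at h2
    rw [← h2]
    apply Finset.sum_congr rfl
    intro j _
    simp [Matrix.conjTranspose_apply, pow_two]
  have hstar : star U = Uᵀ := Matrix.conjTranspose_eq_transpose_of_trivial U
  have hwnorm : ∑ j, w j ^ 2 = ∑ j, v j ^ 2 := by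
    have h1 : ∑ j, w j ^ 2 = w ⬝ᵥ w := by simp [dotProduct, pow_two]
    have h2 : ∑ j, v j ^ 2 = v ⬝ᵥ v := by simp [dotProduct, pow_two]
    rw [h1, h2, hwdef, hstar]
    have step1 : (Uᵀ *ᵥ v) ⬝ᵥ (Uᵀ *ᵥ v) = (v ᵥ* U) ⬝ᵥ (Uᵀ *ᵥ v) := by
      rw [Matrix.mulVec_transpose]
    rw [step1, ← dotProduct_mulVec, Matrix.mulVec_mulVec]
    rw [← hstar, hU2, Matrix.one_mulVec]
  have hvnn : 0 ≤ ∑ j, v j ^ 2 := Finset.sum_nonneg fun j _ => sq_nonneg _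
  have hcs : ((NormedSpace.exp A *ᵥ v) i) ^ 2 ≤ ∑ j, v j ^ 2 := by
    rw [hentry]
    calc (∑ j, U i j * (d j * w j)) ^ 2
        ≤ (∑ j, U i j ^ 2) * ∑ j, (d j * w j) ^ 2 :=
          Finset.sum_mul_sq_le_sq_mul_sq _ _ _
      _ = ∑ j, (d j * w j) ^ 2 := by rw [hrow, one_mul]
      _ ≤ ∑ j, w j ^ 2 := by
          apply Finset.sum_le_sum
          intro j _
          rw [mul_pow]
          have : d j ^ 2 ≤ 1 := by nlinarith [hd0 j, hd1 j]
          nlinarith [sq_nonneg (w j)]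
      _ = ∑ j, v j ^ 2 := hwnorm
  calc |(NormedSpace.exp A *ᵥ v) i| = Real.sqrt (((NormedSpace.exp A *ᵥ v) i) ^ 2) :=
        (Real.sqrt_sq_eq_abs _).symm
    _ ≤ Real.sqrt (∑ j, v j ^ 2) := Real.sqrt_le_sqrt hcs


/-- Under the perturbation bound `|δ| < θ·P_T/(1+√N)` with
`0 < θ < 1 − P_L/P_T`, the proportional power command
`P_i(t) = (P_L / S_i(t))·P_{i,max}` stays strictly below `P_{i,max}`. -/
theorem commanded_power_below_capacity
    (N : ℕ) (hN : 1 ≤ N) (L : Matrix (Fin N) (Fin N) ℝ)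
    (hsymm : L.IsSymm) (hpsd : L.PosSemidef)
    (hL1 : L *ᵥ (fun _ => (1 : ℝ)) = 0)
    (hker : ∀ u : Fin N → ℝ, L *ᵥ u = 0 → ∃ c : ℝ, u = fun _ => c)
    (k : Fin N) (h : ℝ) (hh : 0 < h)
    (PT PL θ δ : ℝ) (hPT : 0 < PT) (hPL : 0 < PL)
    (hθ : 0 < θ) (hθ' : θ < 1 - PL / PT)
    (hδ : |δ| < θ * PT / (1 + Real.sqrt N))
    (S : ℝ → Fin N → ℝ)
    (hS : S = fun t =>
      (fun _ => PT + δ) +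
        NormedSpace.exp (-(t • (L + Matrix.single k k h))) *ᵥ (fun _ => -δ))
    (Pmax : Fin N → ℝ) :
    ∀ i : Fin N, 0 < Pmax i → ∀ t : ℝ, 0 ≤ t →
      (PL / S t i) * Pmax i < Pmax i := by
  intro i hPmax t ht
  have hM : (L + Matrix.single k k h).PosSemidef :=
    hpsd.add (stdBasis_psd N k h hh.le)
  have hbound := entry_bound N _ hM t ht (fun _ => -δ) i
  have hsqrtN : (0:ℝ) ≤ Real.sqrt N := Real.sqrt_nonneg _
  have hsum : Real.sqrt (∑ _j : Fin N, (-δ) ^ 2) = Real.sqrt N * |δ| := by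
    simp only [neg_sq]
    rw [Finset.sum_const, Finset.card_univ, Fintype.card_fin, nsmul_eq_mul,
      Real.sqrt_mul (Nat.cast_nonneg N), Real.sqrt_sq_eq_abs]
  rw [hsum] at hbound
  -- S t i ≥ PT + δ - √N |δ|
  have hSi : S t i = (PT + δ) + (NormedSpace.exp (-(t • (L + Matrix.single k k h))) *ᵥ (fun _ => -δ)) i := by
    rw [hS]
    simp
  have h1N : (0:ℝ) < 1 + Real.sqrt N := by linarith
  have hδ' : (1 + Real.sqrt N) * |δ| < θ * PT := by
    rw [lt_div_iff₀ h1N] at hδ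
    rw [mul_comm]
    exact hδ
  have hPLlt : PL < (1 - θ) * PT := by
    have : PL / PT < 1 - θ := by linarith
    calc PL = (PL / PT) * PT := by field_simp
      _ < (1 - θ) * PT := by exact mul_lt_mul_of_pos_right this hPT
  have hSlb : PL < S t i := by
    have habs : |δ| ≤ δ + |δ| + |δ| := by
      cases abs_cases δ with
      | inl hc => linarith [hc.1]
      | inr hc => linarith [hc.1]
    have := neg_abs_le ((NormedSpace.exp (-(t • (L + Matrix.single k k h))) *ᵥ (fun _ => -δ)) i)
    rw [hSi]
    have hδabs : - |δ| ≤ δ := neg_abs_le δ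
    nlinarith [hbound, hsqrtN]
  have hSpos : 0 < S t i := lt_trans hPL hSlb
  have : PL / S t i < 1 := (div_lt_one hSpos).mpr hSlb
  calc (PL / S t i) * Pmax i < 1 * Pmax i := mul_lt_mul_of_pos_right this hPmax
    _ = Pmax i := one_mul _
end

section
/- Let N ≥ 1, let L be a real symmetric N×N positive semidefinite matrix with L·𝟏 = 0 and kernel exactly the span of 𝟏, let k be an index, h > 0, Δ = h·e_k e_kᵀ, let δ be real, and let P_{1,max}, …, P_{N,max} be real numbers with P_T = Σ_{i=1}^N P_{i,max} > 0. Define S(t) = (P_T + δ)·𝟏 + exp(−t(L + Δ))·(−δ·𝟏), and for P_L real define the Strategy-3 mismatch E(t) = P_L·( −P_T/S_k(t) + Σ_{i=1}^N P_{i,max}/S_i(t) ). Then E(0) = 0, and E is differentiable at t = 0 with derivative E′(0) = h·δ·P_L·(P_T − P_{k,max})/P_T². In particular, if h, P_L > 0, δ ≠ 0 and P_{k,max} < P_T, then E′(0) ≠ 0 and Strategy 3 also produces a transient power mismatch. -/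
open Matrix

attribute [local instance] Matrix.linftyOpNormedRing Matrix.linftyOpNormedAlgebra

/-- For the Strategy-3 mismatch
`E(t) = P_L·(−P_T/S_k(t) + Σ_i P_{i,max}/S_i(t))` along the consensus trajectory,
`E(0) = 0` and `E′(0) = h·δ·P_L·(P_T − P_{k,max})/P_T²`, which is nonzero when
`P_L > 0`, `δ ≠ 0` and `P_{k,max} < P_T`. -/
theorem strategy3_transient_mismatch
    (N : ℕ) (hN : 1 ≤ N) (L : Matrix (Fin N) (Fin N) ℝ)
    (hsymm : L.IsSymm) (hpsd : L.PosSemidef)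
    (hL1 : L *ᵥ (fun _ => (1 : ℝ)) = 0)
    (hker : ∀ u : Fin N → ℝ, L *ᵥ u = 0 → ∃ c : ℝ, u = fun _ => c)
    (k : Fin N) (h : ℝ) (hh : 0 < h) (δ : ℝ)
    (Pmax : Fin N → ℝ) (PT : ℝ) (hPT : PT = ∑ i, Pmax i) (hPTpos : 0 < PT)
    (PL : ℝ)
    (S : ℝ → Fin N → ℝ)
    (hS : S = fun t =>
      (fun _ => PT + δ) +
        NormedSpace.exp (-(t • (L + Matrix.single k k h))) *ᵥ (fun _ => -δ))
    (E : ℝ → ℝ)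
    (hE : E = fun t => PL * (-(PT / S t k) + ∑ i, Pmax i / S t i)) :
    E 0 = 0 ∧
      HasDerivAt E (h * δ * PL * (PT - Pmax k) / PT ^ 2) 0 ∧
      (0 < PL → δ ≠ 0 → Pmax k < PT →
        h * δ * PL * (PT - Pmax k) / PT ^ 2 ≠ 0) := by
  set A : Matrix (Fin N) (Fin N) ℝ := L + Matrix.single k k h with hA
  set v : Fin N → ℝ := fun _ => -δ with hv
  -- value of S at 0
  have hS0 : ∀ i, S 0 i = PT := by
    intro i
    simp only [hS, zero_smul, neg_zero, NormedSpace.exp_zero, Matrix.one_mulVec,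
      Pi.add_apply]
    ring
  have hPTne : PT ≠ 0 := ne_of_gt hPTpos
  -- the per-coordinate derivative value
  set d : Fin N → ℝ := fun i => if i = k then δ * h else 0 with hd
  -- derivative of each coordinate of S
  have hSd : ∀ i, HasDerivAt (fun t => S t i) (d i) 0 := by
    intro i
    -- linear map M ↦ (M *ᵥ v) i
    let φ : Matrix (Fin N) (Fin N) ℝ →ₗ[ℝ] ℝ :=
      { toFun := fun M => (M *ᵥ v) i
        map_add' := by intro M M'; simp [Matrix.add_mulVec]
        map_smul' := by intro c M; simp [Matrix.smul_mulVec] }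
    have h1 : HasDerivAt (fun t : ℝ => NormedSpace.exp (t • (-A)))
        (NormedSpace.exp ((0:ℝ) • (-A)) * (-A)) 0 :=
      hasDerivAt_exp_smul_const (𝕂 := ℝ) (-A) 0
    have h2 := (LinearMap.toContinuousLinearMap φ).hasFDerivAt.comp_hasDerivAt 0 h1
    have h3 : HasDerivAt (fun t : ℝ => ((NormedSpace.exp (t • (-A))) *ᵥ v) i)
        (((-A) *ᵥ v) i) 0 := by
      simp [φ, zero_smul, NormedSpace.exp_zero, one_mul, Function.comp] at h2 ⊢
      exact h2
    have h4 : HasDerivAt (fun t => S t i) (((-A) *ᵥ v) i) 0 := by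
      have : (fun t => S t i)
          = fun t : ℝ => (PT + δ) + ((NormedSpace.exp (t • (-A))) *ᵥ v) i := by
        funext t
        simp [hS, smul_neg, hA, hv]
      rw [this]
      exact h3.const_add _
    -- compute the derivative value
    have hLrow : ∑ j, L i j = 0 := by
      have := congrFun hL1 i
      simpa [Matrix.mulVec, dotProduct] using this
    have hval : ((-A) *ᵥ v) i = d i := by
      have e1 : ((-A) *ᵥ v) i
          = ∑ j, (L i j * δ + Matrix.single k k h i j * δ) := by
        simp [Matrix.mulVec, dotProduct, hA, hv, add_mul]
      rw [e1, Finset.sum_add_distrib, ← Finset.sum_mul, hLrow, zero_mul, zero_add,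
        ← Finset.sum_mul]
      by_cases hik : i = k
      · subst hik
        simp [Matrix.single, hd, Finset.sum_ite_eq, mul_comm]
      · simp [Matrix.single, hd, hik, Finset.sum_ite_eq, Ne.symm hik]
    rwa [hval] at h4
  refine ⟨?_, ?_, ?_⟩
  · simp only [hE]
    rw [hS0 k]
    have : ∑ i, Pmax i / S 0 i = ∑ i, Pmax i / PT := by
      refine Finset.sum_congr rfl fun i _ => by rw [hS0 i]
    rw [this, ← Finset.sum_div, ← hPT]
    field_simp
    ring
  · -- derivative of E
    have hk : HasDerivAt (fun t => -(PT / S t k))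
        (-((0 * S 0 k - PT * d k) / (S 0 k) ^ 2)) 0 :=
      (((hasDerivAt_const (0:ℝ) PT).div (hSd k) (by rw [hS0 k]; exact hPTne))).neg
    have hsum : HasDerivAt (fun t => ∑ i, Pmax i / S t i)
        (∑ i, (0 * S 0 i - Pmax i * d i) / (S 0 i) ^ 2) 0 :=
      HasDerivAt.fun_sum fun i _ =>
        (hasDerivAt_const (0:ℝ) (Pmax i)).div (hSd i) (by rw [hS0 i]; exact hPTne)
    have hEd := ((hk.fun_add hsum).const_mul PL)
    have : (fun t => PL * (-(PT / S t k) + ∑ i, Pmax i / S t i)) = E := by rw [hE]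
    rw [this] at hEd
    refine hEd.congr_deriv ?_
    have hsumval : ∑ i, (0 * S 0 i - Pmax i * d i) / (S 0 i) ^ 2
        = -(Pmax k * (δ * h)) / PT ^ 2 := by
      have e2 : ∀ i, (0 * S 0 i - Pmax i * d i) / (S 0 i) ^ 2
          = if i = k then -(Pmax k * (δ * h)) / PT ^ 2 else 0 := by
        intro i
        by_cases hik : i = k
        · subst hik; rw [hS0 i]; simp [hd]
        · rw [hS0 i]; simp [hd, hik]
      rw [Finset.sum_congr rfl fun i _ => e2 i]
      simp [Finset.sum_ite_eq]
    rw [hsumval, hS0 k]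
    simp only [hd, if_pos rfl]
    field_simp
    ring
  · intro hPL hδ hlt
    apply div_ne_zero
    · exact mul_ne_zero (mul_ne_zero (mul_ne_zero (ne_of_gt hh) hδ) (ne_of_gt hPL))
        (sub_ne_zero.mpr (ne_of_lt hlt).symm)
    · exact pow_ne_zero 2 hPTne
end
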